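/- Let r, s ∈ [0,1] and let h be a homeomorphism of the Cantor set Ω such that μ_s = μ_r ∘ h⁻¹. Then for every i ∈ ℕ, the set of values μ_r(C) over clopen subsets C of h⁻¹(A_i) is exactly the set of values s · P(s) where P ranges over partition polynomials. -/

import Mathlib

open MeasureTheory Polynomial

/-- `P` is a partition polynomial: `P(X) = ∑_{i=0}^n a_i X^i (1-X)^(n-i)` with
integers `0 ≤ a_i ≤ C(n,i)`. -/
def IsPartitionPolynomial (P : Polynomial ℤ) : Prop :=
  ∃ (n : ℕ) (a : ℕ → ℤ),
    (∀ i ≤ n, 0 ≤ a i ∧ a i ≤ (n.choose i : ℤ)) ∧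
    P = ∑ i ∈ Finset.range (n + 1), C (a i) * X ^ i * (1 - X) ^ (n - i)

/-- `μ` is the Bernoulli(`r`) product measure on the Cantor set `ℕ → Bool`:
every cylinder specifying the coordinates in a finite set `s` to agree with `e`
has measure `r^(#1s) * (1-r)^(#0s)`.  (This characterizes the infinite power of
the `(r, 1-r)` measure on `{0,1}` uniquely among Borel measures.) -/
def IsBernoulli (r : ℝ) (μ : Measure (ℕ → Bool)) : Prop :=
  ∀ (s : Finset ℕ) (e : ℕ → Bool),
    μ {x : ℕ → Bool | ∀ i ∈ s, x i = e i} =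
      ENNReal.ofReal (r ^ (s.filter fun i => e i = true).card *
        (1 - r) ^ (s.filter fun i => e i = false).card)

/-- The cylinder `A_i = {x ∈ Ω : x i = 1}`. -/
def cylinderOne (i : ℕ) : Set (ℕ → Bool) := {x : ℕ → Bool | x i = true}

namespace PfAux

open scoped Classical

/-- The cylinder set specified by coordinates in `F` agreeing with `e`. -/
def cyl (F : Finset ℕ) (e : ℕ → Bool) : Set (ℕ → Bool) := {x | ∀ i ∈ F, x i = e i}

lemma cyl_eq (F : Finset ℕ) (e : ℕ → Bool) :
    cyl F e = ⋂ i ∈ F, (fun x : ℕ → Bool => x i) ⁻¹' {e i} := by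
  ext x; simp [cyl]

lemma isClopen_cyl (F : Finset ℕ) (e : ℕ → Bool) : IsClopen (cyl F e) := by
  rw [cyl_eq]
  exact Set.Finite.isClopen_biInter F.finite_toSet
    (fun i _ => (isClopen_discrete _).preimage (continuous_apply i))

lemma measurableSet_cyl (F : Finset ℕ) (e : ℕ → Bool) : MeasurableSet (cyl F e) := by
  rw [cyl_eq]
  exact MeasurableSet.biInter F.countable_toSet
    (fun i _ => (measurable_pi_apply i) (measurableSet_singleton _))

/-- A clopen set in `ℕ → Bool` only depends on finitely many coordinates. -/
lemma exists_dep {Cs : Set (ℕ → Bool)} (hC : IsClopen Cs) :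
    ∃ F : Finset ℕ, ∀ x y : ℕ → Bool, (∀ i ∈ F, x i = y i) → x ∈ Cs → y ∈ Cs := by
  have key : ∀ x : ℕ → Bool, ∃ F : Finset ℕ, cyl F x ⊆ Cs ∨ cyl F x ⊆ Csᶜ := by
    intro x
    by_cases hx : x ∈ Cs
    · obtain ⟨I, u, hu, hsub⟩ := isOpen_pi_iff.mp hC.isOpen x hx
      refine ⟨I, Or.inl (fun y hy => hsub (fun i hi => ?_))⟩
      rw [hy i hi]; exact (hu i hi).2
    · obtain ⟨I, u, hu, hsub⟩ := isOpen_pi_iff.mp hC.compl.isOpen x hx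
      refine ⟨I, Or.inr (fun y hy => hsub (fun i hi => ?_))⟩
      rw [hy i hi]; exact (hu i hi).2
  choose Fx hFx using key
  obtain ⟨T, hT⟩ := isCompact_univ.elim_finite_subcover (fun x => cyl (Fx x) x)
    (fun x => (isClopen_cyl _ _).isOpen)
    (fun x _ => Set.mem_iUnion.mpr ⟨x, fun i _ => rfl⟩)
  refine ⟨T.biUnion Fx, fun x y hxy hx => ?_⟩
  obtain ⟨z, hzT, hxz⟩ := Set.mem_iUnion₂.mp (hT (Set.mem_univ x))
  have hyz : y ∈ cyl (Fx z) z := fun i hi => by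
    rw [← hxy i (Finset.mem_biUnion.mpr ⟨z, hzT, hi⟩)]; exact hxz i hi
  rcases hFx z with hc | hc
  · exact hc hyz
  · exact absurd (hc hxz) (by simpa using hx)

/-- The 0-1 pattern with "true" set `T`. -/
def eT (T : Finset ℕ) : ℕ → Bool := fun n => decide (n ∈ T)

lemma clopen_eq_biUnion {Cs : Set (ℕ → Bool)} (F : Finset ℕ)
    (hdep : ∀ x y : ℕ → Bool, (∀ i ∈ F, x i = y i) → x ∈ Cs → y ∈ Cs) :
    Cs = ⋃ T ∈ F.powerset.filter (fun T => eT T ∈ Cs), cyl F (eT T) := by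
  ext x
  constructor
  · intro hx
    have hagree : ∀ i ∈ F, x i = eT (F.filter (fun n => x n = true)) i := by
      intro i hi
      simp only [eT, Finset.mem_filter]
      cases hxi : x i <;> simp [hi, hxi]
    refine Set.mem_biUnion (Finset.mem_filter.mpr
      ⟨Finset.mem_powerset.mpr (Finset.filter_subset _ _),
       hdep x _ hagree hx⟩) (fun i hi => hagree i hi)
  · intro hx
    obtain ⟨T, hTmem, hxT⟩ := Set.mem_iUnion₂.mp hx
    exact hdep (eT T) x (fun i hi => (hxT i hi).symm) (Finset.mem_filter.mp hTmem).2

lemma measure_cyl {s : ℝ} {ν : Measure (ℕ → Bool)} (hν : IsBernoulli s ν)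
    {F T : Finset ℕ} (hT : T ⊆ F) :
    ν (cyl F (eT T)) = ENNReal.ofReal (s ^ T.card * (1 - s) ^ (F.card - T.card)) := by
  have h1 : F.filter (fun i => eT T i = true) = T := by
    ext i; simp only [eT, Finset.mem_filter, decide_eq_true_eq]
    exact ⟨fun h => h.2, fun h => ⟨hT h, h⟩⟩
  have h2 : F.filter (fun i => eT T i = false) = F \ T := by
    ext i; simp [eT, Finset.mem_filter]
  have := hν F (eT T)
  rw [h1, h2, Finset.card_sdiff_of_subset hT] at this
  exact this

lemma disjoint_cyl {F T T' : Finset ℕ} (hT : T ⊆ F) (hT' : T' ⊆ F) (hne : T ≠ T') :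
    Disjoint (cyl F (eT T)) (cyl F (eT T')) := by
  rw [Set.disjoint_left]
  intro x hx hx'
  apply hne
  ext i
  constructor
  · intro hi
    have := (hx i (hT hi)).symm.trans (hx' i (hT hi))
    simpa [eT, hi] using this
  · intro hi
    have := (hx i (hT' hi)).symm.trans (hx' i (hT' hi))
    simp only [eT] at this
    by_contra hni
    simp [hni, hi] at this

lemma measure_biUnion_cyl {s : ℝ} {ν : Measure (ℕ → Bool)} (hν : IsBernoulli s ν)
    (hs0 : 0 ≤ s) (hs1 : s ≤ 1)
    {F : Finset ℕ} {S : Finset (Finset ℕ)} (hS : ∀ T ∈ S, T ⊆ F) :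
    ν (⋃ T ∈ S, cyl F (eT T)) =
      ENNReal.ofReal (∑ T ∈ S, s ^ T.card * (1 - s) ^ (F.card - T.card)) := by
  rw [measure_biUnion_finset ?_ (fun T _ => measurableSet_cyl _ _)]
  · rw [ENNReal.ofReal_sum_of_nonneg (fun T _ =>
      mul_nonneg (pow_nonneg hs0 _) (pow_nonneg (by linarith) _))]
    exact Finset.sum_congr rfl (fun T hT => measure_cyl hν (hS T hT))
  · intro T hT T' hT' hne
    exact disjoint_cyl (hS T hT) (hS T' hT') hne

lemma aeval_pp (s : ℝ) (n : ℕ) (a : ℕ → ℤ) :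
    aeval s (∑ j ∈ Finset.range (n+1), C (a j) * X ^ j * (1 - X) ^ (n - j)) =
      ∑ j ∈ Finset.range (n+1), (a j : ℝ) * s ^ j * (1 - s) ^ (n - j) := by
  rw [map_sum]
  refine Finset.sum_congr rfl fun j _ => ?_
  simp

lemma forward {s : ℝ} {ν : Measure (ℕ → Bool)} (hν : IsBernoulli s ν)
    (hs0 : 0 ≤ s) (hs1 : s ≤ 1) (i : ℕ) {D : Set (ℕ → Bool)}
    (hD : IsClopen D) (hDi : D ⊆ cylinderOne i) :
    ∃ P : Polynomial ℤ, IsPartitionPolynomial P ∧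
      ν D = ENNReal.ofReal (s * aeval s P) := by
  obtain ⟨F₀, hdep₀⟩ := exists_dep hD
  set F : Finset ℕ := insert i F₀ with hF
  have hdep : ∀ x y : ℕ → Bool, (∀ j ∈ F, x j = y j) → x ∈ D → y ∈ D :=
    fun x y hxy => hdep₀ x y (fun j hj => hxy j (Finset.mem_insert_of_mem hj))
  set S : Finset (Finset ℕ) := F.powerset.filter (fun T => eT T ∈ D) with hSdef
  have hSsub : ∀ T ∈ S, T ⊆ F := fun T hT =>
    Finset.mem_powerset.mp (Finset.mem_filter.mp hT).1
  have hiT : ∀ T ∈ S, i ∈ T := by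
    intro T hT
    have := hDi (Finset.mem_filter.mp hT).2
    simpa [cylinderOne, eT] using this
  have hcard : ∀ T ∈ S, 1 ≤ T.card := fun T hT =>
    Finset.card_pos.mpr ⟨i, hiT T hT⟩
  set n : ℕ := F.card - 1 with hn
  have hFcard : F.card = n + 1 := by
    have : 1 ≤ F.card := Finset.card_pos.mpr ⟨i, Finset.mem_insert_self i F₀⟩
    omega
  set a : ℕ → ℤ := fun j => ((S.filter (fun T => T.card - 1 = j)).card : ℤ) with ha
  have hbound : ∀ j ≤ n, 0 ≤ a j ∧ a j ≤ (n.choose j : ℤ) := by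
    intro j hj
    refine ⟨Int.ofNat_nonneg _, ?_⟩
    have : (S.filter (fun T => T.card - 1 = j)).card ≤
        ((F.erase i).powersetCard j).card := by
      apply Finset.card_le_card_of_injOn (fun T => T.erase i)
      · intro T hT
        obtain ⟨hTS, hTc⟩ := Finset.mem_filter.mp hT
        rw [Finset.mem_coe, Finset.mem_powersetCard]
        refine ⟨Finset.erase_subset_erase i (hSsub T hTS), ?_⟩
        rw [Finset.card_erase_of_mem (hiT T hTS)]
        exact hTc
      · intro T hT T' hT' hTT'
        simp only [Finset.coe_filter, Set.mem_setOf_eq] at hT hT'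
        have h1 : insert i (T.erase i) = T := Finset.insert_erase (hiT T hT.1)
        have h2 : insert i (T'.erase i) = T' := Finset.insert_erase (hiT T' hT'.1)
        rw [← h1, ← h2]
        exact congrArg (insert i) hTT'
    rw [Finset.card_powersetCard, Finset.card_erase_of_mem (Finset.mem_insert_self i F₀),
      ← hn] at this
    simp only [ha]
    exact_mod_cast this
  refine ⟨∑ j ∈ Finset.range (n+1), C (a j) * X ^ j * (1 - X) ^ (n - j),
    ⟨n, a, hbound, rfl⟩, ?_⟩
  rw [clopen_eq_biUnion F hdep, measure_biUnion_cyl hν hs0 hs1 hSsub, aeval_pp]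
  congr 1
  have hmaps : ∀ T ∈ S, T.card - 1 ∈ Finset.range (n+1) := by
    intro T hT
    rw [Finset.mem_range]
    have h1 : T.card ≤ F.card := Finset.card_le_card (hSsub T hT)
    omega
  have hfib := Finset.sum_fiberwise_of_maps_to (g := fun T => T.card - 1)
    (t := Finset.range (n+1)) hmaps (fun T : Finset ℕ => s ^ T.card * (1 - s) ^ (F.card - T.card))
  rw [← hfib]
  · rw [Finset.mul_sum]
    refine Finset.sum_congr rfl fun j hj => ?_
    have : ∀ T ∈ S.filter (fun T => T.card - 1 = j),
        s ^ T.card * (1 - s) ^ (F.card - T.card) = s * (s ^ j * (1 - s) ^ (n - j)) := by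
      intro T hT
      obtain ⟨hTS, hTc⟩ := Finset.mem_filter.mp hT
      have h1 : T.card = j + 1 := by have := hcard T hTS; omega
      rw [h1, hFcard, pow_succ]
      ring_nf
      congr 2
      omega
    rw [Finset.sum_congr rfl this, Finset.sum_const, nsmul_eq_mul]
    push_cast [ha]
    ring

lemma reverse {s : ℝ} {ν : Measure (ℕ → Bool)} (hν : IsBernoulli s ν)
    (hs0 : 0 ≤ s) (hs1 : s ≤ 1) (i : ℕ) (n : ℕ) (a : ℕ → ℤ)
    (hb : ∀ j ≤ n, 0 ≤ a j ∧ a j ≤ (n.choose j : ℤ)) :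
    ∃ D : Set (ℕ → Bool), IsClopen D ∧ D ⊆ cylinderOne i ∧
      ν D = ENNReal.ofReal (s *
        aeval s (∑ j ∈ Finset.range (n+1), C (a j) * X ^ j * (1 - X) ^ (n - j))) := by
  set G : Finset ℕ := (Finset.range n).image (fun k => i + 1 + k) with hG
  have hiG : i ∉ G := by
    simp only [hG, Finset.mem_image, Finset.mem_range]
    rintro ⟨k, -, hk⟩; omega
  have hGcard : G.card = n := by
    rw [hG, Finset.card_image_of_injective _ (fun x y => by omega), Finset.card_range]
  have hpick : ∀ j, j ≤ n → ∃ U : Finset (Finset ℕ),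
      U ⊆ G.powersetCard j ∧ U.card = (a j).toNat := by
    intro j hj
    apply Finset.exists_subset_card_eq
    rw [Finset.card_powersetCard, hGcard]
    have := (hb j hj).2
    omega
  choose U hU1 hU2 using fun j (hj : j ∈ Finset.range (n+1)) =>
    hpick j (by simpa [Nat.lt_succ_iff] using hj)
  set S : Finset (Finset ℕ) :=
    (Finset.range (n+1)).attach.biUnion (fun j => (U j.1 j.2).image (insert i)) with hS
  have hmem : ∀ T ∈ S, ∃ (j : ℕ) (hj : j ∈ Finset.range (n+1)) (B : Finset ℕ),
      B ∈ U j hj ∧ T = insert i B := by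
    intro T hT
    simp only [hS, Finset.mem_biUnion, Finset.mem_attach, true_and, Finset.mem_image] at hT
    obtain ⟨⟨j, hj⟩, B, hB, hTB⟩ := hT
    exact ⟨j, hj, B, hB, hTB.symm⟩
  have hBfacts : ∀ j (hj : j ∈ Finset.range (n+1)) (B : Finset ℕ), B ∈ U j hj →
      B ⊆ G ∧ B.card = j ∧ i ∉ B := by
    intro j hj B hB
    have := Finset.mem_powersetCard.mp (hU1 j hj hB)
    exact ⟨this.1, this.2, fun hi => hiG (this.1 hi)⟩
  set F : Finset ℕ := insert i G with hF
  have hFcard : F.card = n + 1 := by rw [hF, Finset.card_insert_of_notMem hiG, hGcard]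
  have hSsub : ∀ T ∈ S, T ⊆ F := by
    intro T hT
    obtain ⟨j, hj, B, hB, rfl⟩ := hmem T hT
    exact Finset.insert_subset_insert i (hBfacts j hj B hB).1
  refine ⟨⋃ T ∈ S, cyl F (eT T), ?_, ?_, ?_⟩
  · exact Set.Finite.isClopen_biUnion S.finite_toSet (fun T _ => isClopen_cyl _ _)
  · intro x hx
    obtain ⟨T, hTS, hxT⟩ := Set.mem_iUnion₂.mp hx
    obtain ⟨j, hj, B, hB, rfl⟩ := hmem T hTS
    have := hxT i (Finset.mem_insert_self i G)
    simpa [cylinderOne, eT] using this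
  · rw [measure_biUnion_cyl hν hs0 hs1 hSsub, aeval_pp]
    congr 1
    rw [hS, Finset.sum_biUnion, Finset.mul_sum]
    · rw [← Finset.sum_attach (Finset.range (n+1))
        (fun j => s * ((a j : ℝ) * s ^ j * (1 - s) ^ (n - j)))]
      refine Finset.sum_congr rfl fun ⟨j, hj⟩ _ => ?_
      rw [Finset.sum_image]
      · have : ∀ B ∈ U j hj, s ^ (insert i B).card * (1 - s) ^ (F.card - (insert i B).card)
            = s * (s ^ j * (1 - s) ^ (n - j)) := by
          intro B hB
          obtain ⟨-, hBc, hiB⟩ := hBfacts j hj B hB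
          rw [Finset.card_insert_of_notMem hiB, hBc, hFcard, pow_succ]
          ring_nf
          congr 2
          omega
        rw [Finset.sum_congr rfl this, Finset.sum_const, nsmul_eq_mul, hU2 j hj]
        have h0 := (hb j (by simpa [Nat.lt_succ_iff] using hj)).1
        have hcast : ((a j).toNat : ℝ) = (a j : ℝ) := by
          exact_mod_cast congrArg (Int.cast : ℤ → ℝ) (Int.toNat_of_nonneg h0)
        show ((a j).toNat : ℝ) * (s * (s ^ j * (1 - s) ^ (n - j))) =
          s * ((a j : ℝ) * s ^ j * (1 - s) ^ (n - j))
        rw [hcast]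
        ring
      · intro B hB B' hB' hBB'
        have h1 : (insert i B).erase i = B :=
          Finset.erase_insert (hBfacts j hj B hB).2.2
        have h2 : (insert i B').erase i = B' :=
          Finset.erase_insert (hBfacts j hj B' hB').2.2
        rw [← h1, ← h2, hBB']
    · intro x hx y hy hxy
      simp only [Function.onFun]
      rw [Finset.disjoint_left]
      intro T hTx hTy
      obtain ⟨B, hB, hTB⟩ := Finset.mem_image.mp hTx
      obtain ⟨B', hB', hTB'⟩ := Finset.mem_image.mp hTy
      apply hxy
      have hcx : T.card = x.1 + 1 := by
        rw [← hTB, Finset.card_insert_of_notMem (hBfacts _ x.2 B hB).2.2,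
          (hBfacts _ x.2 B hB).2.1]
      have hcy : T.card = y.1 + 1 := by
        rw [← hTB', Finset.card_insert_of_notMem (hBfacts _ y.2 B' hB').2.2,
          (hBfacts _ y.2 B' hB').2.1]
      exact Subtype.ext (by omega)

end PfAux

/-- if `h` is a homeomorphism of the Cantor set with
`μ_s = μ_r ∘ h⁻¹`, then the values `μ_r(C)` over clopen subsets `C` of
`h⁻¹(A_i)` are exactly the values `s * P(s)` for `P` a partition polynomial. -/
theorem measures_of_clopen_subsets_of_preimage_cylinder
    (r s : ℝ) (hr : r ∈ Set.Icc (0 : ℝ) 1) (hs : s ∈ Set.Icc (0 : ℝ) 1)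
    (μ ν : Measure (ℕ → Bool)) (hμ : IsBernoulli r μ) (hν : IsBernoulli s ν)
    (h : (ℕ → Bool) ≃ₜ (ℕ → Bool)) (hh : ν = μ.map h) (i : ℕ) :
    {t : ENNReal | ∃ C : Set (ℕ → Bool), IsClopen C ∧ C ⊆ (⇑h) ⁻¹' cylinderOne i ∧ μ C = t} =
      {t : ENNReal | ∃ P : Polynomial ℤ, IsPartitionPolynomial P ∧
        t = ENNReal.ofReal (s * aeval s P)} := by
  ext t
  simp only [Set.mem_setOf_eq]
  constructor
  · rintro ⟨Cs, hC, hCi, rfl⟩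
    have hD : IsClopen ((h.symm) ⁻¹' Cs) := hC.preimage h.symm.continuous
    have hDi : (h.symm) ⁻¹' Cs ⊆ cylinderOne i := by
      intro x hx
      have := hCi hx
      simpa using this
    obtain ⟨P, hP, hPm⟩ := PfAux.forward hν hs.1 hs.2 i hD hDi
    refine ⟨P, hP, ?_⟩
    rw [← hPm, hh, Measure.map_apply h.continuous.measurable hD.isOpen.measurableSet]
    congr 1
    ext x
    simp
  · rintro ⟨P, ⟨n, a, hb, rfl⟩, rfl⟩
    obtain ⟨D, hD, hDi, hm⟩ := PfAux.reverse hν hs.1 hs.2 i n a hb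
    refine ⟨h ⁻¹' D, hD.preimage h.continuous, Set.preimage_mono hDi, ?_⟩
    rw [← hm, hh, Measure.map_apply h.continuous.measurable hD.isOpen.measurableSet]
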